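/- Let X ⊆ ℝ^d and let K : X × X → ℂ be a kernel, twice continuously differentiable in each variable, with Hermitian symmetry K(x,x') = conj(K(x',x)). Assume that for each x ∈ X the matrix met_x := ∇₁∇₂K(x,x) is real symmetric positive definite, that K(x,x) = 1, and that ∇₁K(x,x) = 0. Define the normalized derivatives K^{(10)}(x,x') := met_x^{-1/2}∇₁K(x,x') ∈ ℂ^d and K^{(11)}(x,x') := met_x^{-1/2} ∇₁∇₂K(x,x') met_{x'}^{-1/2} ∈ ℂ^{d×d} (so that K^{(11)}(x,x) = Id). Let x₁, …, x_s ∈ X be points such that for all i ≠ j: |K(x_i,x_j)| ≤ 1/(4s), ‖K^{(10)}(x_i,x_j)‖₂ ≤ 1/(4s), ‖K^{(10)}(x_j,x_i)‖₂ ≤ 1/(4s), and ‖K^{(11)}(x_i,x_j)‖ ≤ 1/(4s) (spectral norm). Let Υ ∈ ℂ^{s(d+1)×s(d+1)} be the Hermitian matrix with 2×2 block structure Υ = [[Υ₀, Υ₁*],[Υ₁, Υ₂]], where Υ₀ := (K(x_i,x_j))_{i,j} ∈ ℂ^{s×s}, Υ₁ ∈ ℂ^{sd×s} has (i,j) block K^{(10)}(x_i,x_j),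 and Υ₂ ∈ ℂ^{sd×sd} has (i,j) block K^{(11)}(x_i,x_j). Then ‖Id − Υ‖ ≤ 1/2 in spectral norm; in particular Υ is invertible and ‖Υ^{-1}‖ ≤ 2. -/

import Mathlib

open Matrix

/-- The `i`-th standard basis vector of `ℝ^d`. -/
noncomputable def eb {d : ℕ} (i : Fin d) : EuclideanSpace ℝ (Fin d) :=
  EuclideanSpace.single i 1

/-- Partial derivative of a bivariate function in the `k`-th coordinate of the first variable. -/
noncomputable def pd1 {d : ℕ}
    (K : EuclideanSpace ℝ (Fin d) → EuclideanSpace ℝ (Fin d) → ℂ) (k : Fin d) :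
    EuclideanSpace ℝ (Fin d) → EuclideanSpace ℝ (Fin d) → ℂ :=
  fun x y => fderiv ℝ (fun z => K z y) x (eb k)

/-- Partial derivative of a bivariate function in the `l`-th coordinate of the second variable. -/
noncomputable def pd2 {d : ℕ}
    (K : EuclideanSpace ℝ (Fin d) → EuclideanSpace ℝ (Fin d) → ℂ) (l : Fin d) :
    EuclideanSpace ℝ (Fin d) → EuclideanSpace ℝ (Fin d) → ℂ :=
  fun x y => fderiv ℝ (fun z => K x z) y (eb l)

/-- The mixed derivative matrix `∇₁∇₂K(x,x') = (∂_{x_k}∂_{x'_l} K(x,x'))_{k,l}`. -/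
noncomputable def mixed11 {d : ℕ}
    (K : EuclideanSpace ℝ (Fin d) → EuclideanSpace ℝ (Fin d) → ℂ)
    (x x' : EuclideanSpace ℝ (Fin d)) : Matrix (Fin d) (Fin d) ℂ :=
  Matrix.of fun k l => pd2 (pd1 K k) l x x'

/-- The normalized first derivative `K^{(10)}(x,x') = met_x^{-1/2} ∇₁K(x,x') ∈ ℂ^d`,
where `R x = met_x^{-1/2}`. -/
noncomputable def K10n {d : ℕ}
    (K : EuclideanSpace ℝ (Fin d) → EuclideanSpace ℝ (Fin d) → ℂ)
    (R : EuclideanSpace ℝ (Fin d) → Matrix (Fin d) (Fin d) ℝ)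
    (x x' : EuclideanSpace ℝ (Fin d)) : Fin d → ℂ :=
  ((R x).map Complex.ofReal).mulVec fun k => pd1 K k x x'

/-- The normalized mixed derivative `K^{(11)}(x,x') = met_x^{-1/2} ∇₁∇₂K(x,x') met_{x'}^{-1/2}`. -/
noncomputable def K11n {d : ℕ}
    (K : EuclideanSpace ℝ (Fin d) → EuclideanSpace ℝ (Fin d) → ℂ)
    (R : EuclideanSpace ℝ (Fin d) → Matrix (Fin d) (Fin d) ℝ)
    (x x' : EuclideanSpace ℝ (Fin d)) : Matrix (Fin d) (Fin d) ℂ :=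
  (R x).map Complex.ofReal * mixed11 K x x' * (R x').map Complex.ofReal

/-- The ℓ² norm of a complex vector. -/
noncomputable def cnorm2 {d : ℕ} (v : Fin d → ℂ) : ℝ :=
  Real.sqrt (∑ k, Complex.normSq (v k))

/-- The spectral (ℓ²-operator) norm of a complex matrix. -/
noncomputable def specNormC {n : Type*} [Fintype n] [DecidableEq n] (M : Matrix n n ℂ) : ℝ :=
  ‖Matrix.toEuclideanCLM (𝕜 := ℂ) M‖

/-- The interaction (Gram) matrix `Υ = [[Υ₀, Υ₁*], [Υ₁, Υ₂]]` of the points `x i`, with blocks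
`Υ₀ = (K(x_i,x_j))`, `Υ₁` having `(i,j)` block `K^{(10)}(x_i,x_j)` and `Υ₂` having `(i,j)` block
`K^{(11)}(x_i,x_j)`. -/
noncomputable def gram {d s : ℕ}
    (K : EuclideanSpace ℝ (Fin d) → EuclideanSpace ℝ (Fin d) → ℂ)
    (R : EuclideanSpace ℝ (Fin d) → Matrix (Fin d) (Fin d) ℝ)
    (x : Fin s → EuclideanSpace ℝ (Fin d)) :
    Matrix (Fin s ⊕ Fin s × Fin d) (Fin s ⊕ Fin s × Fin d) ℂ :=
  Matrix.of fun p q =>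
    match p, q with
    | Sum.inl i, Sum.inl j => K (x i) (x j)
    | Sum.inl i, Sum.inr (j, l) => starRingEnd ℂ (K10n K R (x j) (x i) l)
    | Sum.inr (i, k), Sum.inl j => K10n K R (x i) (x j) k
    | Sum.inr (i, k), Sum.inr (j, l) => K11n K R (x i) (x j) k l

/- ### auxiliary lemmas -/

lemma cnorm2_eq {d : ℕ} (v : Fin d → ℂ) :
    cnorm2 v = ‖(WithLp.equiv 2 (Fin d → ℂ)).symm v‖ := by
  rw [cnorm2, EuclideanSpace.norm_eq]
  congr 1
  refine Finset.sum_congr rfl fun k _ => ?_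
  rw [Complex.normSq_eq_norm_sq]
  rfl

lemma cnorm2_nonneg {d : ℕ} (v : Fin d → ℂ) : 0 ≤ cnorm2 v := Real.sqrt_nonneg _

lemma cnorm2_sq {d : ℕ} (v : Fin d → ℂ) :
    cnorm2 v ^ 2 = ∑ k, ‖v k‖ ^ 2 := by
  rw [cnorm2, Real.sq_sqrt (Finset.sum_nonneg fun k _ => Complex.normSq_nonneg _)]
  exact Finset.sum_congr rfl fun k _ => Complex.normSq_eq_norm_sq _

lemma cs_vec {d : ℕ} (w v : Fin d → ℂ) :
    ‖∑ l, (starRingEnd ℂ) (w l) * v l‖ ≤ cnorm2 w * cnorm2 v := by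
  have h := norm_inner_le_norm (𝕜 := ℂ) ((WithLp.equiv 2 (Fin d → ℂ)).symm w)
    ((WithLp.equiv 2 (Fin d → ℂ)).symm v)
  simp only [PiLp.inner_apply, RCLike.inner_apply'] at h
  rw [cnorm2_eq, cnorm2_eq]
  exact h

lemma cs_mat {d : ℕ} (A : Matrix (Fin d) (Fin d) ℂ) (a b : Fin d → ℂ) :
    ‖∑ k, ∑ l, (starRingEnd ℂ) (a k) * (A k l * b l)‖ ≤ specNormC A * cnorm2 a * cnorm2 b := by
  set A' := (WithLp.equiv 2 (Fin d → ℂ)).symm a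
  set B' := (WithLp.equiv 2 (Fin d → ℂ)).symm b
  have hTB : ∀ k, (Matrix.toEuclideanCLM (𝕜 := ℂ) A) B' k = ∑ l, A k l * b l := fun k => rfl
  have h1 : ∑ k, ∑ l, (starRingEnd ℂ) (a k) * (A k l * b l)
      = inner ℂ A' ((Matrix.toEuclideanCLM (𝕜 := ℂ) A) B') := by
    rw [PiLp.inner_apply]
    refine Finset.sum_congr rfl fun k _ => ?_
    rw [RCLike.inner_apply', hTB, Finset.mul_sum]
    rfl
  rw [h1]
  calc ‖inner ℂ A' ((Matrix.toEuclideanCLM (𝕜 := ℂ) A) B')‖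
      ≤ ‖A'‖ * ‖(Matrix.toEuclideanCLM (𝕜 := ℂ) A) B'‖ := norm_inner_le_norm _ _
    _ ≤ ‖A'‖ * (specNormC A * ‖B'‖) := by
        gcongr; exact (Matrix.toEuclideanCLM (𝕜 := ℂ) A).le_opNorm B'
    _ = specNormC A * cnorm2 a * cnorm2 b := by rw [cnorm2_eq, cnorm2_eq]; ring

lemma specNormC_le_of_sesq {n : Type*} [Fintype n] [DecidableEq n] (M : Matrix n n ℂ) (C : ℝ)
    (hC : 0 ≤ C)
    (h : ∀ u v : EuclideanSpace ℂ n,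
      ‖∑ q, (starRingEnd ℂ) (u q) * ∑ p, M q p * v p‖ ≤ C * (‖u‖ * ‖v‖)) :
    specNormC M ≤ C := by
  refine ContinuousLinearMap.opNorm_le_bound _ hC fun v => ?_
  set T := Matrix.toEuclideanCLM (𝕜 := ℂ) M
  set u := T v with hu
  have hTv : ∀ q, T v q = ∑ p, M q p * v p := fun q => rfl
  have key : ‖T v‖ ^ 2 = ‖∑ q, (starRingEnd ℂ) (u q) * ∑ p, M q p * v p‖ := by
    have h2 : (inner ℂ u (T v) : ℂ) = ∑ q, (starRingEnd ℂ) (u q) * ∑ p, M q p * v p := by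
      rw [PiLp.inner_apply]
      exact Finset.sum_congr rfl fun q _ => by rw [RCLike.inner_apply', hTv]
    rw [← h2, hu, inner_self_eq_norm_sq_to_K]
    simp
  have h2 : ‖T v‖ ^ 2 ≤ C * (‖T v‖ * ‖v‖) := by rw [key]; exact h u v
  rcases eq_or_lt_of_le (norm_nonneg (T v)) with h0 | h0
  · rw [← h0]; positivity
  · nlinarith

lemma sum_split {s d : ℕ} (f : (Fin s ⊕ Fin s × Fin d) → (Fin s ⊕ Fin s × Fin d) → ℂ) :
    ∑ a, ∑ b, f a b = ∑ i, ∑ j,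
      (f (.inl i) (.inl j) + (∑ l, f (.inl i) (.inr (j,l)))
        + (∑ k, f (.inr (i,k)) (.inl j)) + ∑ k, ∑ l, f (.inr (i,k)) (.inr (j,l))) := by
  have c1 : (∑ i, ∑ k : Fin d, ∑ j, f (.inr (i,k)) (.inl j))
      = ∑ i, ∑ j, ∑ k : Fin d, f (.inr (i,k)) (.inl j) :=
    Finset.sum_congr rfl fun i _ => Finset.sum_comm
  have c2 : (∑ i, ∑ k : Fin d, ∑ j, ∑ l, f (.inr (i,k)) (.inr (j,l)))
      = ∑ i, ∑ j, ∑ k : Fin d, ∑ l, f (.inr (i,k)) (.inr (j,l)) :=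
    Finset.sum_congr rfl fun i _ => Finset.sum_comm
  simp only [Fintype.sum_sum_type, Fintype.sum_prod_type, Finset.sum_add_distrib, c1, c2]
  abel

lemma RmetR {d : ℕ} (met R : Matrix (Fin d) (Fin d) ℝ) (hmet : met.PosDef)
    (hRR : R * R = met⁻¹) : R * met * R = 1 := by
  have hdet : IsUnit met := hmet.isUnit
  have hinv : met⁻¹ * met = 1 := Matrix.nonsing_inv_mul _ ((isUnit_iff_isUnit_det _).1 hdet)
  have hinv' : met * met⁻¹ = 1 := Matrix.mul_nonsing_inv _ ((isUnit_iff_isUnit_det _).1 hdet)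
  have hcomm : R * met⁻¹ = met⁻¹ * R := by
    rw [← hRR, mul_assoc]
  have hcommM : met * R = R * met := by
    calc met * R = met * R * (met⁻¹ * met) := by rw [hinv, mul_one]
      _ = met * (R * met⁻¹) * met := by rw [mul_assoc, mul_assoc, mul_assoc]
      _ = met * (met⁻¹ * R) * met := by rw [hcomm]
      _ = (met * met⁻¹) * (R * met) := by rw [mul_assoc, mul_assoc, mul_assoc]
      _ = R * met := by rw [hinv', one_mul]
  calc R * met * R = R * (R * met) := by rw [mul_assoc, hcommM]
    _ = met⁻¹ * met := by rw [← mul_assoc, hRR]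
    _ = 1 := hinv

lemma mapRmul {d : ℕ} (A B : Matrix (Fin d) (Fin d) ℝ) :
    (A * B).map Complex.ofReal = A.map Complex.ofReal * B.map Complex.ofReal := by
  have h : (Complex.ofReal : ℝ → ℂ) = ⇑Complex.ofRealHom := rfl
  rw [h, Matrix.map_mul]

lemma mapRone {d : ℕ} : (1 : Matrix (Fin d) (Fin d) ℝ).map Complex.ofReal = 1 := by
  have h : (Complex.ofReal : ℝ → ℂ) = ⇑Complex.ofRealHom := rfl
  rw [h, Matrix.map_one _ (map_zero _) (map_one _)]

/- key summing lemma for the ℓ² bound on the `c` sums -/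
lemma sum_c_le {s d : ℕ} (u : EuclideanSpace ℂ (Fin s ⊕ Fin s × Fin d)) :
    ∑ i, (‖u (Sum.inl i)‖ + cnorm2 (fun k => u (Sum.inr (i,k))))
      ≤ Real.sqrt (2 * s) * ‖u‖ := by
  set F : Fin s → ℝ := fun i => ‖u (Sum.inl i)‖ + cnorm2 (fun k => u (Sum.inr (i,k)))
    with hF
  have hFnn : ∀ i, 0 ≤ F i := fun i => add_nonneg (norm_nonneg _) (cnorm2_nonneg _)
  have hnorm : ‖u‖ ^ 2 = ∑ i, ‖u (Sum.inl i)‖ ^ 2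
      + ∑ i, ∑ k, ‖u (Sum.inr (i,k))‖ ^ 2 := by
    rw [EuclideanSpace.norm_eq, Real.sq_sqrt (Finset.sum_nonneg fun q _ => sq_nonneg _)]
    rw [Fintype.sum_sum_type, Fintype.sum_prod_type]
  have hsum2 : ∑ i, F i ^ 2 ≤ 2 * ‖u‖ ^ 2 := by
    have step : ∑ i, F i ^ 2 ≤ ∑ i, 2 * (‖u (Sum.inl i)‖ ^ 2
        + cnorm2 (fun k => u (Sum.inr (i,k))) ^ 2) := by
      refine Finset.sum_le_sum fun i _ => ?_
      have := sq_nonneg (‖u (Sum.inl i)‖ - cnorm2 (fun k => u (Sum.inr (i,k))))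
      simp only [hF]; nlinarith
    calc ∑ i, F i ^ 2 ≤ _ := step
      _ = 2 * ‖u‖ ^ 2 := by
          rw [hnorm, ← Finset.sum_add_distrib, Finset.mul_sum]
          exact Finset.sum_congr rfl fun i _ => by rw [cnorm2_sq]
  have hsq : (∑ i, F i) ^ 2 ≤ 2 * s * ‖u‖ ^ 2 := by
    have := sq_sum_le_card_mul_sum_sq (s := (Finset.univ : Finset (Fin s))) (f := F)
    simp only [Finset.card_univ, Fintype.card_fin] at this
    calc (∑ i, F i) ^ 2 ≤ s * ∑ i, F i ^ 2 := this
      _ ≤ s * (2 * ‖u‖ ^ 2) := by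
          have : (0:ℝ) ≤ s := Nat.cast_nonneg s
          nlinarith
      _ = 2 * s * ‖u‖ ^ 2 := by ring
  have h1 : ∑ i, F i = Real.sqrt ((∑ i, F i) ^ 2) :=
    (Real.sqrt_sq (Finset.sum_nonneg fun i _ => hFnn i)).symm
  rw [h1]
  calc Real.sqrt ((∑ i, F i) ^ 2) ≤ Real.sqrt (2 * s * ‖u‖ ^ 2) := Real.sqrt_le_sqrt hsq
    _ = Real.sqrt (2 * s) * ‖u‖ := by
        rw [Real.sqrt_mul (by positivity), Real.sqrt_sq (norm_nonneg _)]

/-- invertibility of the interaction matrix; proof of Theorem 2 of the paper.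
For a Hermitian kernel `K` with `K(x,x) = 1`, `∇₁K(x,x) = 0` and positive definite Fisher metric
tensor `met x = ∇₁∇₂K(x,x)` (with `R x` its inverse positive square root), if the points
`x₁, …, x_s` satisfy the pairwise interaction bounds `≤ 1/(4s)`, then `‖Id − Υ‖ ≤ 1/2`;
in particular `Υ` is invertible and `‖Υ⁻¹‖ ≤ 2`. -/
theorem statement18 {d s : ℕ} (hs : 0 < s)
    (X : Set (EuclideanSpace ℝ (Fin d)))
    (K : EuclideanSpace ℝ (Fin d) → EuclideanSpace ℝ (Fin d) → ℂ)
    (hK : ContDiff ℝ 2 fun p : EuclideanSpace ℝ (Fin d) × EuclideanSpace ℝ (Fin d) => K p.1 p.2)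
    (hherm : ∀ x ∈ X, ∀ x' ∈ X, K x x' = starRingEnd ℂ (K x' x))
    (met : EuclideanSpace ℝ (Fin d) → Matrix (Fin d) (Fin d) ℝ)
    (hmet : ∀ x ∈ X, (met x).map Complex.ofReal = mixed11 K x x ∧ (met x).PosDef)
    (hone : ∀ x ∈ X, K x x = 1)
    (hgrad : ∀ x ∈ X, ∀ k, pd1 K k x x = 0)
    (R : EuclideanSpace ℝ (Fin d) → Matrix (Fin d) (Fin d) ℝ)
    (hR : ∀ x ∈ X, (R x).PosDef ∧ R x * R x = (met x)⁻¹)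
    (x : Fin s → EuclideanSpace ℝ (Fin d)) (hx : ∀ i, x i ∈ X)
    (hsep : ∀ i j, i ≠ j →
      ‖K (x i) (x j)‖ ≤ 1 / (4 * s) ∧
      cnorm2 (K10n K R (x i) (x j)) ≤ 1 / (4 * s) ∧
      cnorm2 (K10n K R (x j) (x i)) ≤ 1 / (4 * s) ∧
      specNormC (K11n K R (x i) (x j)) ≤ 1 / (4 * s)) :
    specNormC (1 - gram K R x) ≤ 1 / 2 ∧
    IsUnit (gram K R x) ∧
    specNormC (gram K R x)⁻¹ ≤ 2 := by
  have hs' : (0:ℝ) < s := by exact_mod_cast hs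
  set q : ℝ := 1 / (4 * s) with hqdef
  have hq : 0 ≤ q := by positivity
  -- diagonal identities
  have hK10diag : ∀ i, K10n K R (x i) (x i) = 0 := by
    intro i
    have : (fun k => pd1 K k (x i) (x i)) = (0 : Fin d → ℂ) :=
      funext fun k => hgrad (x i) (hx i) k
    rw [K10n, this, Matrix.mulVec_zero]
  have hK11diag : ∀ i, K11n K R (x i) (x i) = 1 := by
    intro i
    have h1 := (hmet (x i) (hx i)).1
    have h2 := (hmet (x i) (hx i)).2
    have h3 := (hR (x i) (hx i)).2
    rw [K11n, ← h1, ← mapRmul, ← mapRmul, RmetR _ _ h2 h3, mapRone]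
  -- the main norm bound
  have h1 : specNormC (1 - gram K R x) ≤ 1 / 2 := by
    refine specNormC_le_of_sesq _ _ (by norm_num) fun u v => ?_
    set M := 1 - gram K R x with hM
    set c : EuclideanSpace ℂ (Fin s ⊕ Fin s × Fin d) → Fin s → ℝ :=
      fun w i => ‖w (Sum.inl i)‖ + cnorm2 (fun k => w (Sum.inr (i,k))) with hc
    have hcnn : ∀ w i, 0 ≤ c w i :=
      fun w i => add_nonneg (norm_nonneg _) (cnorm2_nonneg _)
    have expand : ∑ p, (starRingEnd ℂ) (u p) * ∑ p', M p p' * v p'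
        = ∑ a, ∑ b, (starRingEnd ℂ) (u a) * (M a b * v b) := by
      refine Finset.sum_congr rfl fun p _ => ?_
      rw [Finset.mul_sum]
    rw [expand, sum_split (fun a b => (starRingEnd ℂ) (u a) * (M a b * v b))]
    have hblk : ∀ i j,
        ‖(starRingEnd ℂ) (u (.inl i)) * (M (.inl i) (.inl j) * v (.inl j))
          + (∑ l, (starRingEnd ℂ) (u (.inl i)) * (M (.inl i) (.inr (j,l)) * v (.inr (j,l))))
          + (∑ k, (starRingEnd ℂ) (u (.inr (i,k))) * (M (.inr (i,k)) (.inl j) * v (.inl j)))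
          + ∑ k, ∑ l, (starRingEnd ℂ) (u (.inr (i,k))) * (M (.inr (i,k)) (.inr (j,l)) * v (.inr (j,l)))‖
        ≤ q * (c u i * c v j) := by
      intro i j
      by_cases hij : i = j
      · subst hij
        have e00 : M (.inl i) (.inl i) = 0 := by
          simp [hM, Matrix.sub_apply, Matrix.one_apply, _root_.gram, hone _ (hx i)]
        have e01 : ∀ l, M (.inl i) (.inr (i,l)) = 0 := by
          intro l
          simp [hM, Matrix.sub_apply, Matrix.one_apply, _root_.gram, hK10diag i]
        have e10 : ∀ k, M (.inr (i,k)) (.inl i) = 0 := by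
          intro k
          simp [hM, Matrix.sub_apply, Matrix.one_apply, _root_.gram, hK10diag i]
        have e11 : ∀ k l, M (.inr (i,k)) (.inr (i,l)) = 0 := by
          intro k l
          simp [hM, Matrix.sub_apply, Matrix.one_apply, _root_.gram, hK11diag i, Prod.ext_iff]
        simp only [e00, e01, e10, e11, mul_zero, zero_mul, Finset.sum_const_zero, add_zero,
          norm_zero]
        exact mul_nonneg hq (mul_nonneg (hcnn u i) (hcnn v i))
      · have hsij := hsep i j hij
        have f00 : M (.inl i) (.inl j) = -(K (x i) (x j)) := by
          simp [hM, Matrix.sub_apply, Matrix.one_apply, _root_.gram, hij]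
        have f01 : ∀ l, M (.inl i) (.inr (j,l))
            = -((starRingEnd ℂ) (K10n K R (x j) (x i) l)) := by
          intro l; simp [hM, Matrix.sub_apply, Matrix.one_apply, _root_.gram]
        have f10 : ∀ k, M (.inr (i,k)) (.inl j) = -(K10n K R (x i) (x j) k) := by
          intro k; simp [hM, Matrix.sub_apply, Matrix.one_apply, _root_.gram]
        have f11 : ∀ k l, M (.inr (i,k)) (.inr (j,l)) = -(K11n K R (x i) (x j) k l) := by
          intro k l
          simp [hM, Matrix.sub_apply, Matrix.one_apply, _root_.gram, Prod.ext_iff, hij]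
        simp only [f00, f01, f10, f11]
        -- four term bounds
        have b0 : ‖(starRingEnd ℂ) (u (.inl i)) * (-(K (x i) (x j)) * v (.inl j))‖
            ≤ ‖u (.inl i)‖ * (q * ‖v (.inl j)‖) := by
          rw [norm_mul, norm_mul, norm_neg]
          simp only [Complex.norm_conj]
          gcongr
          exact hsij.1
        have b1 : ‖∑ l, (starRingEnd ℂ) (u (.inl i))
              * (-((starRingEnd ℂ) (K10n K R (x j) (x i) l)) * v (.inr (j,l)))‖
            ≤ ‖u (.inl i)‖ * (q * cnorm2 (fun l => v (.inr (j,l)))) := by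
          have e : ∑ l, (starRingEnd ℂ) (u (.inl i))
              * (-((starRingEnd ℂ) (K10n K R (x j) (x i) l)) * v (.inr (j,l)))
              = -((starRingEnd ℂ) (u (.inl i))
                * ∑ l, (starRingEnd ℂ) (K10n K R (x j) (x i) l) * v (.inr (j,l))) := by
            rw [Finset.mul_sum, ← Finset.sum_neg_distrib]
            exact Finset.sum_congr rfl fun l _ => by ring
          rw [e, norm_neg, norm_mul]
          simp only [Complex.norm_conj]
          calc ‖u (.inl i)‖
                * ‖∑ l, (starRingEnd ℂ) (K10n K R (x j) (x i) l) * v (.inr (j,l))‖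
              ≤ ‖u (.inl i)‖
                * (cnorm2 (K10n K R (x j) (x i)) * cnorm2 (fun l => v (.inr (j,l)))) := by
                gcongr
                exact cs_vec _ _
            _ ≤ ‖u (.inl i)‖ * (q * cnorm2 (fun l => v (.inr (j,l)))) := by
                gcongr
                · exact cnorm2_nonneg _
                · exact hsij.2.2.1
        have b2 : ‖∑ k, (starRingEnd ℂ) (u (.inr (i,k)))
              * (-(K10n K R (x i) (x j) k) * v (.inl j))‖
            ≤ cnorm2 (fun k => u (.inr (i,k))) * (q * ‖v (.inl j)‖) := by
          have e : ∑ k, (starRingEnd ℂ) (u (.inr (i,k)))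
              * (-(K10n K R (x i) (x j) k) * v (.inl j))
              = -((∑ k, (starRingEnd ℂ) (u (.inr (i,k))) * K10n K R (x i) (x j) k)
                * v (.inl j)) := by
            rw [Finset.sum_mul, ← Finset.sum_neg_distrib]
            exact Finset.sum_congr rfl fun k _ => by ring
          rw [e, norm_neg, norm_mul]
          calc ‖∑ k, (starRingEnd ℂ) (u (.inr (i,k))) * K10n K R (x i) (x j) k‖
                * ‖v (.inl j)‖
              ≤ (cnorm2 (fun k => u (.inr (i,k))) * cnorm2 (K10n K R (x i) (x j)))
                * ‖v (.inl j)‖ := by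
                gcongr
                exact cs_vec _ _
            _ ≤ cnorm2 (fun k => u (.inr (i,k))) * (q * ‖v (.inl j)‖) := by
                rw [mul_assoc]
                gcongr
                · exact cnorm2_nonneg _
                · exact hsij.2.1
        have b3 : ‖∑ k, ∑ l, (starRingEnd ℂ) (u (.inr (i,k)))
              * (-(K11n K R (x i) (x j) k l) * v (.inr (j,l)))‖
            ≤ cnorm2 (fun k => u (.inr (i,k))) * (q * cnorm2 (fun l => v (.inr (j,l)))) := by
          have e : ∑ k, ∑ l, (starRingEnd ℂ) (u (.inr (i,k)))
              * (-(K11n K R (x i) (x j) k l) * v (.inr (j,l)))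
              = -(∑ k, ∑ l, (starRingEnd ℂ) (u (.inr (i,k)))
                * (K11n K R (x i) (x j) k l * v (.inr (j,l)))) := by
            rw [← Finset.sum_neg_distrib]
            refine Finset.sum_congr rfl fun k _ => ?_
            rw [← Finset.sum_neg_distrib]
            exact Finset.sum_congr rfl fun l _ => by ring
          rw [e, norm_neg]
          calc ‖∑ k, ∑ l, (starRingEnd ℂ) (u (.inr (i,k)))
                * (K11n K R (x i) (x j) k l * v (.inr (j,l)))‖
              ≤ specNormC (K11n K R (x i) (x j)) * cnorm2 (fun k => u (.inr (i,k)))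
                * cnorm2 (fun l => v (.inr (j,l))) := cs_mat _ _ _
            _ ≤ q * cnorm2 (fun k => u (.inr (i,k))) * cnorm2 (fun l => v (.inr (j,l))) := by
                gcongr
                · exact cnorm2_nonneg _
                · exact cnorm2_nonneg _
                · exact hsij.2.2.2
            _ = cnorm2 (fun k => u (.inr (i,k))) * (q * cnorm2 (fun l => v (.inr (j,l)))) := by
                ring
        calc ‖_ + _ + _ + _‖
            ≤ ‖(starRingEnd ℂ) (u (.inl i)) * (-(K (x i) (x j)) * v (.inl j))
                + (∑ l, (starRingEnd ℂ) (u (.inl i))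
                  * (-((starRingEnd ℂ) (K10n K R (x j) (x i) l)) * v (.inr (j,l))))
                + (∑ k, (starRingEnd ℂ) (u (.inr (i,k)))
                  * (-(K10n K R (x i) (x j) k) * v (.inl j)))‖
              + ‖∑ k, ∑ l, (starRingEnd ℂ) (u (.inr (i,k)))
                  * (-(K11n K R (x i) (x j) k l) * v (.inr (j,l)))‖ := norm_add_le _ _
          _ ≤ (‖(starRingEnd ℂ) (u (.inl i)) * (-(K (x i) (x j)) * v (.inl j))
                + (∑ l, (starRingEnd ℂ) (u (.inl i))
                  * (-((starRingEnd ℂ) (K10n K R (x j) (x i) l)) * v (.inr (j,l))))‖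
              + ‖∑ k, (starRingEnd ℂ) (u (.inr (i,k)))
                  * (-(K10n K R (x i) (x j) k) * v (.inl j))‖)
              + ‖∑ k, ∑ l, (starRingEnd ℂ) (u (.inr (i,k)))
                  * (-(K11n K R (x i) (x j) k l) * v (.inr (j,l)))‖ := by
              gcongr
              exact norm_add_le _ _
          _ ≤ ((‖(starRingEnd ℂ) (u (.inl i)) * (-(K (x i) (x j)) * v (.inl j))‖
              + ‖∑ l, (starRingEnd ℂ) (u (.inl i))
                  * (-((starRingEnd ℂ) (K10n K R (x j) (x i) l)) * v (.inr (j,l)))‖)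
              + ‖∑ k, (starRingEnd ℂ) (u (.inr (i,k)))
                  * (-(K10n K R (x i) (x j) k) * v (.inl j))‖)
              + ‖∑ k, ∑ l, (starRingEnd ℂ) (u (.inr (i,k)))
                  * (-(K11n K R (x i) (x j) k l) * v (.inr (j,l)))‖ := by
              gcongr
              exact norm_add_le _ _
          _ ≤ ((‖u (.inl i)‖ * (q * ‖v (.inl j)‖)
              + ‖u (.inl i)‖ * (q * cnorm2 (fun l => v (.inr (j,l)))))
              + cnorm2 (fun k => u (.inr (i,k))) * (q * ‖v (.inl j)‖))
              + cnorm2 (fun k => u (.inr (i,k))) * (q * cnorm2 (fun l => v (.inr (j,l)))) := by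
              exact add_le_add (add_le_add (add_le_add b0 b1) b2) b3
          _ = q * (c u i * c v j) := by simp only [hc]; ring
    calc ‖∑ i, ∑ j, _‖
        ≤ ∑ i, ‖∑ j, ((starRingEnd ℂ) (u (.inl i)) * (M (.inl i) (.inl j) * v (.inl j))
          + (∑ l, (starRingEnd ℂ) (u (.inl i)) * (M (.inl i) (.inr (j,l)) * v (.inr (j,l))))
          + (∑ k, (starRingEnd ℂ) (u (.inr (i,k))) * (M (.inr (i,k)) (.inl j) * v (.inl j)))
          + ∑ k, ∑ l, (starRingEnd ℂ) (u (.inr (i,k)))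
              * (M (.inr (i,k)) (.inr (j,l)) * v (.inr (j,l))))‖ := norm_sum_le _ _
      _ ≤ ∑ i, ∑ j, q * (c u i * c v j) :=
          Finset.sum_le_sum fun i _ =>
            (norm_sum_le _ _).trans (Finset.sum_le_sum fun j _ => hblk i j)
      _ = q * ((∑ i, c u i) * (∑ j, c v j)) := by
          rw [Finset.sum_mul_sum, Finset.mul_sum]
          exact Finset.sum_congr rfl fun i _ => by rw [Finset.mul_sum]
      _ ≤ q * ((Real.sqrt (2 * s) * ‖u‖) * (Real.sqrt (2 * s) * ‖v‖)) := by
          have hSu : ∑ i, c u i ≤ Real.sqrt (2 * s) * ‖u‖ := sum_c_le u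
          have hSv : ∑ j, c v j ≤ Real.sqrt (2 * s) * ‖v‖ := sum_c_le v
          exact mul_le_mul_of_nonneg_left
            (mul_le_mul hSu hSv (Finset.sum_nonneg fun j _ => hcnn v j) (by positivity)) hq
      _ = q * (2 * s) * (‖u‖ * ‖v‖) := by
          have : Real.sqrt (2 * s) * Real.sqrt (2 * s) = 2 * s :=
            Real.mul_self_sqrt (by positivity)
          calc q * ((Real.sqrt (2*s) * ‖u‖) * (Real.sqrt (2*s) * ‖v‖))
              = q * ((Real.sqrt (2*s) * Real.sqrt (2*s)) * (‖u‖ * ‖v‖)) := by ring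
            _ = q * (2 * s) * (‖u‖ * ‖v‖) := by rw [this]; ring
      _ = 1 / 2 * (‖u‖ * ‖v‖) := by
          rw [hqdef]
          field_simp
          ring
  -- conclusion
  set G := gram K R x with hG
  set T := Matrix.toEuclideanCLM (𝕜 := ℂ) (1 - G) with hT
  have hTle : ‖T‖ ≤ 1 / 2 := h1
  have hTlt : ‖T‖ < 1 := lt_of_le_of_lt hTle (by norm_num)
  set U : (EuclideanSpace ℂ (Fin s ⊕ Fin s × Fin d) →L[ℂ]
      EuclideanSpace ℂ (Fin s ⊕ Fin s × Fin d))ˣ := Units.oneSub T hTlt with hU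
  have hGT : Matrix.toEuclideanCLM (𝕜 := ℂ) G = (U : EuclideanSpace ℂ (Fin s ⊕ Fin s × Fin d)
      →L[ℂ] EuclideanSpace ℂ (Fin s ⊕ Fin s × Fin d)) := by
    rw [hU, Units.val_oneSub, hT, _root_.map_sub, _root_.map_one, sub_sub_cancel]
  set B := (Matrix.toEuclideanCLM (𝕜 := ℂ)
      (n := Fin s ⊕ Fin s × Fin d)).symm ((U⁻¹ : _ˣ) : EuclideanSpace ℂ (Fin s ⊕ Fin s × Fin d)
      →L[ℂ] EuclideanSpace ℂ (Fin s ⊕ Fin s × Fin d)) with hB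
  have hGsymm : G = (Matrix.toEuclideanCLM (𝕜 := ℂ)
      (n := Fin s ⊕ Fin s × Fin d)).symm ((U : EuclideanSpace ℂ (Fin s ⊕ Fin s × Fin d)
      →L[ℂ] EuclideanSpace ℂ (Fin s ⊕ Fin s × Fin d))) := by
    rw [← hGT, StarAlgEquiv.symm_apply_apply]
  have hGB : G * B = 1 := by
    rw [hGsymm, hB, ← _root_.map_mul, U.mul_inv, _root_.map_one]
  have hBG : B * G = 1 := by
    rw [hGsymm, hB, ← _root_.map_mul, U.inv_mul, _root_.map_one]
  have hu : IsUnit G := ⟨⟨G, B, hGB, hBG⟩, rfl⟩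
  refine ⟨h1, hu, ?_⟩
  have hGinv : G⁻¹ = B := Matrix.inv_eq_right_inv hGB
  rw [hGinv]
  have hBnorm : specNormC B = ‖((U⁻¹ : _ˣ) : EuclideanSpace ℂ (Fin s ⊕ Fin s × Fin d)
      →L[ℂ] EuclideanSpace ℂ (Fin s ⊕ Fin s × Fin d))‖ := by
    rw [specNormC, hB, StarAlgEquiv.apply_symm_apply]
  rw [hBnorm]
  refine ContinuousLinearMap.opNorm_le_bound _ (by norm_num) fun w => ?_
  set z := ((U⁻¹ : _ˣ) : EuclideanSpace ℂ (Fin s ⊕ Fin s × Fin d)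
      →L[ℂ] EuclideanSpace ℂ (Fin s ⊕ Fin s × Fin d)) w with hz
  have hUz : (U : EuclideanSpace ℂ (Fin s ⊕ Fin s × Fin d)
      →L[ℂ] EuclideanSpace ℂ (Fin s ⊕ Fin s × Fin d)) z = w := by
    rw [hz, ← ContinuousLinearMap.mul_apply, U.mul_inv, ContinuousLinearMap.one_apply]
  have hUval : (U : EuclideanSpace ℂ (Fin s ⊕ Fin s × Fin d)
      →L[ℂ] EuclideanSpace ℂ (Fin s ⊕ Fin s × Fin d)) = 1 - T := Units.val_oneSub T hTlt
  have hTz : ‖T z‖ ≤ 1 / 2 * ‖z‖ := by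
    calc ‖T z‖ ≤ ‖T‖ * ‖z‖ := T.le_opNorm z
      _ ≤ 1 / 2 * ‖z‖ := by gcongr
  have hlow : ‖z‖ - ‖T z‖ ≤ ‖w‖ := by
    calc ‖z‖ - ‖T z‖ ≤ ‖z - T z‖ := norm_sub_norm_le _ _
      _ = ‖w‖ := by
          rw [← hUz, hUval]
          simp [ContinuousLinearMap.sub_apply]
  linarith
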